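/- Let s > 5/2 and suppose (ξ_k)_{k≥1} satisfies Σ_{k≥1} ‖ξ_k‖_{H^σ} < ∞ for every σ ≥ 0. Define, for θ ∈ H^s(𝕋), g(θ) = −(𝓗θ) ∂_x θ + ½ Σ_{k=1}^∞ 𝓛²_{ξ_k} θ. Then there is a constant C > 0 (depending on s and (ξ_k)) such that for all θ ∈ H^s(𝕋): ‖g(θ)‖_{H^{s-2}} ≤ C (1 + ‖θ‖²_{H^s}) and (Σ_{k=1}^∞ ‖𝓛_{ξ_k} θ‖²_{H^{s-1}})^{1/2} ≤ C ‖θ‖_{H^s}. -/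

import Mathlib

noncomputable section
open scoped BigOperators

/-- A (complex-valued) function on the torus `𝕋 = ℝ/2πℤ`, represented by its sequence of
Fourier coefficients `f̂ : ℤ → ℂ`. -/
abbrev FC := ℤ → ℂ

namespace FC

/-- The Sobolev weight `(1+k²)^s`. -/
def wt (s : ℝ) (k : ℤ) : ℝ := (1 + (k : ℝ) ^ 2) ^ s

/-- `c` represents a function belonging to the Sobolev space `H^s(𝕋)`. -/
def memHs (s : ℝ) (c : FC) : Prop := Summable fun k : ℤ => wt s k * ‖c k‖ ^ 2

/-- The `H^s(𝕋)` norm: `‖f‖²_{H^s} = Σ_{k∈ℤ} (1+k²)^s |f̂(k)|²`. -/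
def hsNorm (s : ℝ) (c : FC) : ℝ := Real.sqrt (∑' k : ℤ, wt s k * ‖c k‖ ^ 2)

/-- The `H^s(𝕋)` inner product `(f,g)_{H^s} = Σ_{k∈ℤ} (1+k²)^s f̂(k) conj(ĝ(k))`
(its real part; the sum is real for real-valued functions). -/
def hsInner (s : ℝ) (c d : FC) : ℝ :=
  (∑' k : ℤ, ((wt s k : ℂ) * (c k * (starRingEnd ℂ) (d k)))).re

/-- `c` represents a real-valued function (conjugate-symmetric coefficients). -/
def isReal (c : FC) : Prop := ∀ k : ℤ, c (-k) = (starRingEnd ℂ) (c k)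

/-- The derivative `∂ₓ`, i.e. the Fourier multiplier `ik`. -/
def D1 (c : FC) : FC := fun k => Complex.I * (k : ℂ) * c k

/-- The pointwise product of functions, i.e. convolution of Fourier coefficients. -/
def mul (c d : FC) : FC := fun k => ∑' j : ℤ, c j * d (k - j)

/-- The represented function, evaluated at `x ∈ ℝ`. -/
def eval (c : FC) (x : ℝ) : ℂ := ∑' k : ℤ, c k * Complex.exp (Complex.I * (k : ℂ) * (x : ℂ))

/-- The `L^∞` norm (supremum of the represented periodic function over ℝ). -/
def linfty (c : FC) : ℝ := ⨆ x : ℝ, ‖eval c x‖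

/-- The `W^{1,∞}` norm. -/
def w1infty (c : FC) : ℝ := linfty c + linfty (D1 c)

/-- A Fourier multiplier operator with real symbol `m`. -/
def mult (m : ℤ → ℝ) (c : FC) : FC := fun k => (m k : ℂ) * c k

/-- The operator `(1-∂ₓ²)⁻¹`, i.e. the Fourier multiplier `(1+k²)⁻¹`. -/
def helmInv : FC → FC := mult fun k => (1 + (k : ℝ) ^ 2)⁻¹

/-- The operator `1-∂ₓ²`, i.e. the Fourier multiplier `1+k²`. -/
def helm : FC → FC := mult fun k => 1 + (k : ℝ) ^ 2

/-- The operator `T̃_ε = (1-ε²∂ₓ²)⁻¹`, i.e. the Fourier multiplier `(1+ε²k²)⁻¹`. -/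
def T (ε : ℝ) : FC → FC := mult fun k => (1 + ε ^ 2 * (k : ℝ) ^ 2)⁻¹

/-- The periodic Hilbert transform, i.e. the Fourier multiplier `-i·sgn(k)`. -/
def hilbert (c : FC) : FC := fun k => -Complex.I * (Int.sign k : ℂ) * c k

/-- The Friedrichs-type mollifier `J_ε`, the Fourier multiplier `ĵ(εk)`. -/
def Jmol (jhat : ℝ → ℝ) (ε : ℝ) : FC → FC := mult fun k => jhat (ε * (k : ℝ))

/-- The generalized Lie derivative `𝓛_ξ f = ξ ∂ₓ f + (∂ₓ ξ) f`. -/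
def lie (ξ c : FC) : FC := mul ξ (D1 c) + mul (D1 ξ) c

/-- `𝓛²_ξ f = 𝓛_ξ (𝓛_ξ f)`. -/
def lie2 (ξ c : FC) : FC := lie ξ (lie ξ c)

/-- The coefficientwise sum `Σ_{k∈ℕ} F k` of a sequence of functions. -/
def tsumFC (F : ℕ → FC) : FC := fun m => ∑' k : ℕ, F k m

/-- The norm on the product space `H^{s₁}×H^{s₂}`. -/
def pairNorm (s₁ s₂ : ℝ) (c d : FC) : ℝ := Real.sqrt (hsNorm s₁ c ^ 2 + hsNorm s₂ d ^ 2)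

/-- The inner product on the product space `H^{s₁}×H^{s₂}`:
`((c₁,d₁),(c₂,d₂)) ↦ (c₁,c₂)_{H^{s₁}} + (d₁,d₂)_{H^{s₂}}`. -/
def pairInner (s₁ s₂ : ℝ) (c₁ d₁ c₂ d₂ : FC) : ℝ := hsInner s₁ c₁ c₂ + hsInner s₂ d₁ d₂

end FC
namespace FC

open scoped ENNReal NNReal

lemma base_pos (k : ℤ) : (0:ℝ) < 1 + (k:ℝ)^2 := by positivity
lemma base_one_le (k : ℤ) : (1:ℝ) ≤ 1 + (k:ℝ)^2 := by nlinarith [sq_nonneg ((k:ℝ))]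

lemma wt_pos (s : ℝ) (k : ℤ) : 0 < wt s k := Real.rpow_pos_of_pos (base_pos k) s
lemma wt_nonneg (s : ℝ) (k : ℤ) : 0 ≤ wt s k := (wt_pos s k).le
lemma wt_mono {σ τ : ℝ} (h : σ ≤ τ) (k : ℤ) : wt σ k ≤ wt τ k :=
  Real.rpow_le_rpow_of_exponent_le (base_one_le k) h
lemma wt_add (σ τ : ℝ) (k : ℤ) : wt (σ + τ) k = wt σ k * wt τ k :=
  Real.rpow_add (base_pos k) σ τ
lemma wt_one (k : ℤ) : wt 1 k = 1 + (k:ℝ)^2 := Real.rpow_one _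

lemma wt_submult {τ : ℝ} (hτ : 0 ≤ τ) (j l : ℤ) :
    wt τ (j + l) ≤ 2 ^ τ * (wt τ j * wt τ l) := by
  have h1 : (1:ℝ) + ((j+l : ℤ):ℝ)^2 ≤ 2 * ((1 + (j:ℝ)^2) * (1 + (l:ℝ)^2)) := by
    push_cast; nlinarith [sq_nonneg ((j:ℝ) - l), sq_nonneg ((j:ℝ)*(l:ℝ))]
  calc wt τ (j+l) ≤ (2 * ((1 + (j:ℝ)^2) * (1 + (l:ℝ)^2))) ^ τ :=
        Real.rpow_le_rpow (base_pos _).le h1 hτ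
    _ = 2 ^ τ * (wt τ j * wt τ l) := by
        rw [Real.mul_rpow (by norm_num) (by positivity),
          Real.mul_rpow (base_pos j).le (base_pos l).le]
        rfl

/-- The `ENNReal` Sobolev weight. -/
def W (s : ℝ) (k : ℤ) : ℝ≥0∞ := ENNReal.ofReal (wt s k)

/-- The squared Sobolev norm, valued in `ℝ≥0∞`. -/
def en (s : ℝ) (c : FC) : ℝ≥0∞ := ∑' k : ℤ, W s k * (‖c k‖₊ : ℝ≥0∞) ^ 2

lemma W_mono {σ τ : ℝ} (h : σ ≤ τ) (k : ℤ) : W σ k ≤ W τ k :=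
  ENNReal.ofReal_le_ofReal (wt_mono h k)
lemma W_add (σ τ : ℝ) (k : ℤ) : W (σ+τ) k = W σ k * W τ k := by
  rw [W, wt_add, ENNReal.ofReal_mul (wt_nonneg σ k)]; rfl
lemma W_one (k : ℤ) : W 1 k = ENNReal.ofReal (1 + (k:ℝ)^2) := by rw [W, wt_one]

lemma coe_nnnorm_mono {x y : ℂ} (h : ‖x‖ ≤ ‖y‖) : (‖x‖₊ : ℝ≥0∞) ≤ (‖y‖₊ : ℝ≥0∞) := by
  exact_mod_cast h

lemma rpow_half_sq (x : ℝ≥0∞) : (x ^ (1/2:ℝ)) ^ 2 = x := by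
  rw [← ENNReal.rpow_natCast (x ^ (1/2:ℝ)) 2, ← ENNReal.rpow_mul]
  norm_num

lemma en_term_eq (s : ℝ) (c : FC) (k : ℤ) :
    W s k * (‖c k‖₊ : ℝ≥0∞) ^ 2 = ENNReal.ofReal (wt s k * ‖c k‖ ^ 2) := by
  rw [ENNReal.ofReal_mul (wt_nonneg s k)]
  congr 1
  rw [ENNReal.ofReal_pow (norm_nonneg _)]
  congr 1
  exact (ofReal_norm (c k)).symm

lemma en_eq_ofReal {s : ℝ} {c : FC} (h : memHs s c) :
    en s c = ENNReal.ofReal (∑' k : ℤ, wt s k * ‖c k‖^2) := by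
  rw [ENNReal.ofReal_tsum_of_nonneg (fun k => mul_nonneg (wt_nonneg _ _) (by positivity)) h]
  exact tsum_congr (en_term_eq s c)

lemma en_ne_top {s : ℝ} {c : FC} (h : memHs s c) : en s c ≠ ∞ := by
  rw [en_eq_ofReal h]; exact ENNReal.ofReal_ne_top

lemma memHs_of_en_ne_top {s : ℝ} {c : FC} (h : en s c ≠ ∞) : memHs s c := by
  have h2 : ∀ k : ℤ, W s k * (‖c k‖₊ : ℝ≥0∞) ^ 2
      = (((wt s k * ‖c k‖^2).toNNReal : ℝ≥0) : ℝ≥0∞) := by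
    intro k; rw [en_term_eq]; rfl
  rw [en, tsum_congr h2] at h
  have := ENNReal.tsum_coe_ne_top_iff_summable.mp h
  have := NNReal.summable_coe.mpr this
  refine this.congr fun k => ?_
  exact Real.coe_toNNReal _ (mul_nonneg (wt_nonneg _ _) (by positivity))

lemma hsNorm_nonneg (s : ℝ) (c : FC) : 0 ≤ hsNorm s c := Real.sqrt_nonneg _

lemma hsNorm_sq {s : ℝ} {c : FC} (h : memHs s c) : hsNorm s c ^ 2 = (en s c).toReal := by
  rw [en_eq_ofReal h, ENNReal.toReal_ofReal (tsum_nonneg fun k => mul_nonneg (wt_nonneg _ _) (by positivity))]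
  exact Real.sq_sqrt (tsum_nonneg fun k => mul_nonneg (wt_nonneg _ _) (by positivity))

lemma en_rpow_half {s : ℝ} {c : FC} (h : memHs s c) :
    en s c ^ (1/2:ℝ) = ENNReal.ofReal (hsNorm s c) := by
  rw [en_eq_ofReal h,
    ENNReal.ofReal_rpow_of_nonneg (tsum_nonneg fun k => mul_nonneg (wt_nonneg _ _) (by positivity)) (by norm_num)]
  congr 1
  rw [hsNorm, Real.sqrt_eq_rpow]

lemma tsum_CS (f g : ℤ → ℝ≥0∞) :
    ∑' k, f k * g k ≤ (∑' k, f k ^ 2) ^ (1/2:ℝ) * (∑' k, g k ^ 2) ^ (1/2:ℝ) := by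
  have hpq : Real.HolderConjugate 2 2 := Real.HolderConjugate.two_two
  have h := ENNReal.lintegral_mul_le_Lp_mul_Lq (MeasureTheory.Measure.count (α := ℤ)) hpq
    (measurable_of_countable f).aemeasurable (measurable_of_countable g).aemeasurable
  simpa [MeasureTheory.lintegral_count, ENNReal.rpow_two] using h

lemma young (a b : ℤ → ℝ≥0∞) :
    ∑' k, (∑' j, a j * b (k - j)) ^ 2 ≤ (∑' j, a j) ^ 2 * ∑' m, b m ^ 2 := by
  have step1 : ∀ k : ℤ, (∑' j, a j * b (k - j)) ^ 2
      ≤ (∑' j, a j) * ∑' j, a j * b (k - j) ^ 2 := by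
    intro k
    have hcs := tsum_CS (fun j => (a j) ^ (1/2:ℝ)) (fun j => (a j) ^ (1/2:ℝ) * b (k - j))
    have h1 : ∀ j : ℤ, (a j) ^ (1/2:ℝ) * ((a j)^(1/2:ℝ) * b (k-j)) = a j * b (k-j) := by
      intro j; rw [← mul_assoc, ← sq, rpow_half_sq]
    have h2 : ∀ j : ℤ, ((a j) ^ (1/2:ℝ)) ^ 2 = a j := fun j => rpow_half_sq _
    have h3 : ∀ j : ℤ, ((a j)^(1/2:ℝ) * b (k-j)) ^ 2 = a j * b (k-j) ^ 2 := by
      intro j; rw [mul_pow, rpow_half_sq]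
    rw [tsum_congr h1, tsum_congr h2, tsum_congr h3] at hcs
    calc (∑' j, a j * b (k - j)) ^ 2
        ≤ ((∑' j, a j) ^ (1/2:ℝ) * (∑' j, a j * b (k-j) ^ 2) ^ (1/2:ℝ)) ^ 2 :=
          pow_le_pow_left₀ zero_le hcs 2
      _ = (∑' j, a j) * ∑' j, a j * b (k - j) ^ 2 := by
          rw [mul_pow, rpow_half_sq, rpow_half_sq]
  calc ∑' k, (∑' j, a j * b (k - j)) ^ 2
      ≤ ∑' k : ℤ, (∑' j, a j) * ∑' j, a j * b (k - j) ^ 2 := ENNReal.tsum_le_tsum step1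
    _ = (∑' j, a j) * ∑' k : ℤ, ∑' j, a j * b (k - j) ^ 2 := ENNReal.tsum_mul_left
    _ = (∑' j, a j) * ∑' j, ∑' k : ℤ, a j * b (k - j) ^ 2 := by rw [ENNReal.tsum_comm]
    _ = (∑' j, a j) * ∑' j, a j * ∑' k : ℤ, b (k - j) ^ 2 := by
        congr 1; exact tsum_congr fun j => ENNReal.tsum_mul_left
    _ = (∑' j, a j) * ∑' j : ℤ, a j * ∑' m : ℤ, b m ^ 2 := by
        congr 1; refine tsum_congr fun j => ?_
        congr 1
        exact (Equiv.subRight j).tsum_eq (fun m => b m ^ 2)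
    _ = (∑' j, a j) ^ 2 * ∑' m, b m ^ 2 := by
        rw [ENNReal.tsum_mul_right, sq]; ring

end FC
namespace FC

open scoped ENNReal NNReal

lemma summable_inv_base : Summable fun j : ℤ => (1 + (j:ℝ)^2)⁻¹ := by
  have hnat : Summable fun n : ℕ => ((n:ℝ)^2)⁻¹ := by
    simpa using Real.summable_nat_pow_inv.mpr one_lt_two
  have hshift : Summable fun n : ℕ => 2 * (((n:ℝ) + 1)^2)⁻¹ := by
    have h2 := (summable_nat_add_iff 1).mpr hnat
    exact (h2.mul_left 2).congr fun n => by push_cast; ring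
  have key : Summable fun n : ℕ => (1 + (n:ℝ)^2)⁻¹ := by
    refine hshift.of_nonneg_of_le (fun n => by positivity) fun n => ?_
    have h1 : ((n:ℝ) + 1)^2 / 2 ≤ 1 + (n:ℝ)^2 := by nlinarith [sq_nonneg ((n:ℝ) - 1)]
    calc (1 + (n:ℝ)^2)⁻¹ ≤ (((n:ℝ)+1)^2 / 2)⁻¹ :=
          inv_anti₀ (by positivity) h1
      _ = 2 * (((n:ℝ)+1)^2)⁻¹ := by rw [inv_div]; ring
  refine Summable.of_nat_of_neg (key.congr fun n => ?_) (key.congr fun n => ?_) <;>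
    push_cast <;> ring_nf

/-- The constant `Σ_{j∈ℤ} (1+j²)⁻¹` as an `ℝ≥0∞`. -/
def Bc : ℝ≥0∞ := ∑' j : ℤ, ENNReal.ofReal ((1 + (j:ℝ)^2)⁻¹)

lemma Bc_ne_top : Bc ≠ ∞ := by
  rw [Bc, ← ENNReal.ofReal_tsum_of_nonneg (fun j => by positivity) summable_inv_base]
  exact ENNReal.ofReal_ne_top

lemma enn_nnnorm_tsum_le {ι : Type*} (h : ι → ℂ) :
    (‖∑' i, h i‖₊ : ℝ≥0∞) ≤ ∑' i, (‖h i‖₊ : ℝ≥0∞) := by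
  by_cases H : ∑' i, (‖h i‖₊ : ℝ≥0∞) = ∞
  · simp [H]
  · have hsum : Summable fun i => ‖h i‖₊ := ENNReal.tsum_coe_ne_top_iff_summable.mp H
    rw [← ENNReal.coe_tsum hsum]
    exact ENNReal.coe_le_coe.mpr (nnnorm_tsum_le hsum)

lemma l1_bound (τ : ℝ) (f : FC) :
    ∑' j : ℤ, (W τ j) ^ (1/2:ℝ) * (‖f j‖₊ : ℝ≥0∞) ≤ (Bc * en (τ+1) f) ^ (1/2:ℝ) := by
  have hW : ∀ j : ℤ, W τ j = ENNReal.ofReal ((1 + (j:ℝ)^2)⁻¹) * W (τ+1) j := by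
    intro j
    rw [W, W, ← ENNReal.ofReal_mul (by positivity)]
    congr 1
    have h2 : wt (τ+1) j = wt τ j * (1 + (j:ℝ)^2) := by rw [wt_add, wt_one]
    rw [h2]
    field_simp
  have key : ∀ j : ℤ, (W τ j) ^ (1/2:ℝ) * (‖f j‖₊ : ℝ≥0∞)
      = (ENNReal.ofReal ((1 + (j:ℝ)^2)⁻¹)) ^ (1/2:ℝ)
        * ((W (τ+1) j) ^ (1/2:ℝ) * (‖f j‖₊ : ℝ≥0∞)) := by
    intro j
    rw [hW j, ENNReal.mul_rpow_of_nonneg _ _ (by norm_num), mul_assoc]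
  rw [tsum_congr key]
  refine (tsum_CS _ _).trans (le_of_eq ?_)
  have e1 : ∀ j : ℤ, ((ENNReal.ofReal ((1 + (j:ℝ)^2)⁻¹)) ^ (1/2:ℝ))^2
      = ENNReal.ofReal ((1 + (j:ℝ)^2)⁻¹) := fun j => rpow_half_sq _
  have e2 : ∀ j : ℤ, ((W (τ+1) j) ^ (1/2:ℝ) * (‖f j‖₊ : ℝ≥0∞))^2
      = W (τ+1) j * (‖f j‖₊ : ℝ≥0∞)^2 := by
    intro j; rw [mul_pow, rpow_half_sq]
  rw [tsum_congr e1, tsum_congr e2, ← ENNReal.mul_rpow_of_nonneg _ _ (by norm_num)]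
  rfl

lemma en_mul_le {τ : ℝ} (hτ : 0 ≤ τ) (f g : FC) :
    en τ (mul f g) ≤ ENNReal.ofReal (2^τ) * Bc * en (τ+1) f * en τ g := by
  set A : ℤ → ℝ≥0∞ := fun j => (W τ j) ^ (1/2:ℝ) * (‖f j‖₊ : ℝ≥0∞) with hA
  set B : ℤ → ℝ≥0∞ := fun m => (W τ m) ^ (1/2:ℝ) * (‖g m‖₊ : ℝ≥0∞) with hB
  have hterm : ∀ k : ℤ, W τ k * (‖mul f g k‖₊ : ℝ≥0∞) ^ 2
      ≤ ENNReal.ofReal (2^τ) * (∑' j, A j * B (k - j)) ^ 2 := by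
    intro k
    have h0 : (‖mul f g k‖₊ : ℝ≥0∞) ≤ ∑' j : ℤ, (‖f j‖₊ : ℝ≥0∞) * (‖g (k-j)‖₊ : ℝ≥0∞) := by
      refine (enn_nnnorm_tsum_le _).trans (le_of_eq (tsum_congr fun j => ?_))
      rw [nnnorm_mul, ENNReal.coe_mul]
    have h1 : W τ k * (‖mul f g k‖₊ : ℝ≥0∞) ^ 2
        = ((W τ k) ^ (1/2:ℝ) * (‖mul f g k‖₊ : ℝ≥0∞)) ^ 2 := by
      rw [mul_pow, rpow_half_sq]
    rw [h1]
    have h2 : (W τ k) ^ (1/2:ℝ) * (‖mul f g k‖₊ : ℝ≥0∞)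
        ≤ (ENNReal.ofReal (2^τ)) ^ (1/2:ℝ) * ∑' j, A j * B (k - j) := by
      calc (W τ k) ^ (1/2:ℝ) * (‖mul f g k‖₊ : ℝ≥0∞)
          ≤ (W τ k) ^ (1/2:ℝ) * ∑' j : ℤ, (‖f j‖₊ : ℝ≥0∞) * (‖g (k-j)‖₊ : ℝ≥0∞) := by
            gcongr
        _ = ∑' j : ℤ, (W τ k) ^ (1/2:ℝ) * ((‖f j‖₊ : ℝ≥0∞) * (‖g (k-j)‖₊ : ℝ≥0∞)) :=
            ENNReal.tsum_mul_left.symm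
        _ ≤ ∑' j : ℤ, (ENNReal.ofReal (2^τ)) ^ (1/2:ℝ) * (A j * B (k - j)) := by
            refine ENNReal.tsum_le_tsum fun j => ?_
            have hjk : j + (k - j) = k := by ring
            have hsub := wt_submult hτ j (k - j)
            rw [hjk] at hsub
            have hWk : W τ k ≤ ENNReal.ofReal (2^τ) * (W τ j * W τ (k - j)) := by
              calc W τ k = ENNReal.ofReal (wt τ k) := rfl
                _ ≤ ENNReal.ofReal (2^τ * (wt τ j * wt τ (k-j))) :=
                    ENNReal.ofReal_le_ofReal hsub
                _ = _ := by
                    rw [ENNReal.ofReal_mul (by positivity),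
                      ENNReal.ofReal_mul (wt_nonneg _ _)]
                    rfl
            have hWk2 : (W τ k) ^ (1/2:ℝ)
                ≤ (ENNReal.ofReal (2^τ)) ^ (1/2:ℝ)
                  * ((W τ j)^(1/2:ℝ) * (W τ (k-j))^(1/2:ℝ)) := by
              calc (W τ k) ^ (1/2:ℝ)
                  ≤ (ENNReal.ofReal (2^τ) * (W τ j * W τ (k-j))) ^ (1/2:ℝ) :=
                    ENNReal.rpow_le_rpow hWk (by norm_num)
                _ = _ := by
                    rw [ENNReal.mul_rpow_of_nonneg _ _ (by norm_num),
                      ENNReal.mul_rpow_of_nonneg _ _ (by norm_num)]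
            calc (W τ k) ^ (1/2:ℝ) * ((‖f j‖₊ : ℝ≥0∞) * (‖g (k-j)‖₊ : ℝ≥0∞))
                ≤ ((ENNReal.ofReal (2^τ)) ^ (1/2:ℝ)
                    * ((W τ j)^(1/2:ℝ) * (W τ (k-j))^(1/2:ℝ)))
                    * ((‖f j‖₊ : ℝ≥0∞) * (‖g (k-j)‖₊ : ℝ≥0∞)) := by gcongr
              _ = (ENNReal.ofReal (2^τ)) ^ (1/2:ℝ) * (A j * B (k - j)) := by
                  rw [hA, hB]; ring
        _ = (ENNReal.ofReal (2^τ)) ^ (1/2:ℝ) * ∑' j, A j * B (k - j) :=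
            ENNReal.tsum_mul_left
    calc ((W τ k) ^ (1/2:ℝ) * (‖mul f g k‖₊ : ℝ≥0∞)) ^ 2
        ≤ ((ENNReal.ofReal (2^τ)) ^ (1/2:ℝ) * ∑' j, A j * B (k - j)) ^ 2 :=
          pow_le_pow_left₀ zero_le h2 2
      _ = ENNReal.ofReal (2^τ) * (∑' j, A j * B (k - j)) ^ 2 := by
          rw [mul_pow, rpow_half_sq]
  calc en τ (mul f g) ≤ ∑' k, ENNReal.ofReal (2^τ) * (∑' j, A j * B (k - j)) ^ 2 :=
        ENNReal.tsum_le_tsum hterm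
    _ = ENNReal.ofReal (2^τ) * ∑' k, (∑' j, A j * B (k - j)) ^ 2 := ENNReal.tsum_mul_left
    _ ≤ ENNReal.ofReal (2^τ) * ((∑' j, A j) ^ 2 * ∑' m, B m ^ 2) := by
        gcongr
        exact young A B
    _ ≤ ENNReal.ofReal (2^τ) * (((Bc * en (τ+1) f) ^ (1/2:ℝ)) ^ 2 * en τ g) := by
        gcongr
        · exact l1_bound τ f
        · refine le_of_eq (tsum_congr fun m => ?_)
          rw [hB, mul_pow, rpow_half_sq]
    _ = ENNReal.ofReal (2^τ) * Bc * en (τ+1) f * en τ g := by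
        rw [rpow_half_sq]; ring

lemma two_mul_le_sq_add (a b : ℝ≥0∞) : 2 * (a * b) ≤ a ^ 2 + b ^ 2 := by
  rcases eq_or_ne a ∞ with ha | ha
  · rcases eq_or_ne b 0 with hb | hb
    · simp [hb]
    · have h1 : a ^ 2 = ∞ := by simp [ha]
      rw [h1]; simp
  rcases eq_or_ne b ∞ with hb | hb
  · have h1 : b ^ 2 = ∞ := by simp [hb]
    rw [h1]; simp
  lift a to ℝ≥0 using ha
  lift b to ℝ≥0 using hb
  have h : (2:ℝ≥0) * (a * b) ≤ a^2 + b^2 := by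
    rw [← NNReal.coe_le_coe]
    push_cast
    nlinarith [sq_nonneg ((a:ℝ) - (b:ℝ))]
  exact_mod_cast h

lemma sq_add_le (x y : ℝ≥0∞) : (x + y)^2 ≤ 2 * (x^2 + y^2) := by
  calc (x + y)^2 = (x^2 + y^2) + 2*(x*y) := by ring
    _ ≤ (x^2 + y^2) + (x^2 + y^2) := add_le_add le_rfl (two_mul_le_sq_add x y)
    _ = 2 * (x^2 + y^2) := (two_mul _).symm

lemma en_add_le (s : ℝ) (c d : FC) : en s (c + d) ≤ 2 * (en s c + en s d) := by
  have h1 : ∀ k : ℤ, W s k * (‖(c + d) k‖₊ : ℝ≥0∞) ^ 2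
      ≤ 2 * (W s k * (‖c k‖₊:ℝ≥0∞)^2 + W s k * (‖d k‖₊:ℝ≥0∞)^2) := by
    intro k
    have hn : (‖(c + d) k‖₊ : ℝ≥0∞) ≤ (‖c k‖₊:ℝ≥0∞) + (‖d k‖₊:ℝ≥0∞) := by
      rw [← ENNReal.coe_add]
      exact ENNReal.coe_le_coe.mpr (nnnorm_add_le (c k) (d k))
    calc W s k * (‖(c + d) k‖₊ : ℝ≥0∞) ^ 2
        ≤ W s k * ((‖c k‖₊:ℝ≥0∞) + (‖d k‖₊:ℝ≥0∞))^2 := by gcongr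
      _ ≤ W s k * (2 * ((‖c k‖₊:ℝ≥0∞)^2 + (‖d k‖₊:ℝ≥0∞)^2)) := by
          gcongr
          exact sq_add_le _ _
      _ = 2 * (W s k * (‖c k‖₊:ℝ≥0∞)^2 + W s k * (‖d k‖₊:ℝ≥0∞)^2) := by ring
  calc en s (c + d)
      ≤ ∑' k, 2 * (W s k * (‖c k‖₊:ℝ≥0∞)^2 + W s k * (‖d k‖₊:ℝ≥0∞)^2) :=
        ENNReal.tsum_le_tsum h1
    _ = 2 * (en s c + en s d) := by rw [ENNReal.tsum_mul_left, ENNReal.tsum_add]; rfl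

lemma en_neg (s : ℝ) (c : FC) : en s (-c) = en s c :=
  tsum_congr fun k => by simp [Pi.neg_apply]

lemma en_smul_half (s : ℝ) (c : FC) : en s ((1/2 : ℝ) • c) ≤ en s c := by
  refine ENNReal.tsum_le_tsum fun k => ?_
  gcongr
  have h : ‖((1/2:ℝ) • c) k‖ ≤ ‖c k‖ := by
    rw [Pi.smul_apply, norm_smul, Real.norm_eq_abs,
      abs_of_nonneg (by norm_num : (0:ℝ) ≤ 1/2)]
    nlinarith [norm_nonneg (c k)]
  exact_mod_cast h

lemma en_mono {σ τ : ℝ} (h : σ ≤ τ) (c : FC) : en σ c ≤ en τ c :=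
  ENNReal.tsum_le_tsum fun k => by gcongr ?_ * _; exact W_mono h k

lemma en_D1 (σ : ℝ) (c : FC) : en σ (D1 c) ≤ en (σ+1) c := by
  refine ENNReal.tsum_le_tsum fun k => ?_
  have hn : (‖D1 c k‖₊ : ℝ≥0∞)^2 = ENNReal.ofReal ((k:ℝ)^2) * (‖c k‖₊ : ℝ≥0∞)^2 := by
    have h1 : ‖D1 c k‖ = |(k:ℝ)| * ‖c k‖ := by
      rw [D1, norm_mul, norm_mul, Complex.norm_I, one_mul]
      congr 1
      exact Complex.norm_intCast k
    have h2 : (‖D1 c k‖₊ : ℝ≥0∞) = ENNReal.ofReal |(k:ℝ)| * (‖c k‖₊ : ℝ≥0∞) := by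
      rw [← ENNReal.ofReal_coe_nnreal, ← ENNReal.ofReal_coe_nnreal, coe_nnnorm, coe_nnnorm, h1,
        ENNReal.ofReal_mul (abs_nonneg _)]
    rw [h2, mul_pow, ← ENNReal.ofReal_pow (abs_nonneg _), sq_abs]
  rw [hn, ← mul_assoc]
  have hW : W σ k * ENNReal.ofReal ((k:ℝ)^2) ≤ W (σ+1) k := by
    rw [W, W, ← ENNReal.ofReal_mul (wt_nonneg _ _)]
    apply ENNReal.ofReal_le_ofReal
    have h3 : wt (σ+1) k = wt σ k * (1+(k:ℝ)^2) := by rw [wt_add, wt_one]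
    rw [h3]
    have := wt_nonneg σ k
    nlinarith [sq_nonneg ((k:ℝ))]
  gcongr

lemma en_hilbert (σ : ℝ) (c : FC) : en σ (hilbert c) ≤ en σ c := by
  refine ENNReal.tsum_le_tsum fun k => ?_
  gcongr
  have h : ‖hilbert c k‖ ≤ ‖c k‖ := by
    rw [hilbert]
    rw [norm_mul, norm_mul, norm_neg, Complex.norm_I, one_mul]
    have h2 : ‖((Int.sign k : ℂ))‖ ≤ 1 := by
      rcases k with (_|n)|n <;> simp [Int.sign]
    nlinarith [norm_nonneg (c k)]
  exact_mod_cast h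

lemma en_tsumFC_le (s : ℝ) (F : ℕ → FC) :
    en s (tsumFC F) ≤ (∑' n : ℕ, en s (F n) ^ (1/2:ℝ)) ^ 2 := by
  set x : ℕ → ℤ → ℝ≥0∞ := fun n m => (‖F n m‖₊ : ℝ≥0∞) with hx
  have step1 : en s (tsumFC F) ≤ ∑' m : ℤ, W s m * (∑' n, x n m) ^ 2 := by
    refine ENNReal.tsum_le_tsum fun m => ?_
    gcongr
    exact enn_nnnorm_tsum_le _
  have expand : ∀ m : ℤ, W s m * (∑' n, x n m)^2
      = ∑' n : ℕ, ∑' l : ℕ, W s m * (x n m * x l m) := by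
    intro m
    calc W s m * (∑' n, x n m)^2
        = W s m * ∑' n : ℕ, ∑' l : ℕ, x n m * x l m := by
          congr 1
          rw [sq, ← ENNReal.tsum_mul_right]
          exact tsum_congr fun n => ENNReal.tsum_mul_left.symm
      _ = ∑' n : ℕ, ∑' l : ℕ, W s m * (x n m * x l m) := by
          rw [← ENNReal.tsum_mul_left]
          exact tsum_congr fun n => ENNReal.tsum_mul_left.symm
  have swap : ∑' m : ℤ, ∑' n : ℕ, ∑' l : ℕ, W s m * (x n m * x l m)
      = ∑' n : ℕ, ∑' l : ℕ, ∑' m : ℤ, W s m * (x n m * x l m) := by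
    rw [ENNReal.tsum_comm]
    exact tsum_congr fun n => ENNReal.tsum_comm
  have inner_le : ∀ n l : ℕ, ∑' m : ℤ, W s m * (x n m * x l m)
      ≤ en s (F n) ^ (1/2:ℝ) * en s (F l) ^ (1/2:ℝ) := by
    intro n l
    have h1 : ∀ m : ℤ, W s m * (x n m * x l m)
        = ((W s m)^(1/2:ℝ) * x n m) * ((W s m)^(1/2:ℝ) * x l m) := by
      intro m
      rw [mul_mul_mul_comm, ← sq, rpow_half_sq]
    rw [tsum_congr h1]
    refine (tsum_CS _ _).trans ?_
    refine mul_le_mul' ?_ ?_ <;>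
      exact ENNReal.rpow_le_rpow
        (le_of_eq (tsum_congr fun m => by rw [mul_pow, rpow_half_sq])) (by norm_num)
  calc en s (tsumFC F) ≤ ∑' m : ℤ, W s m * (∑' n, x n m) ^ 2 := step1
    _ = ∑' m : ℤ, ∑' n : ℕ, ∑' l : ℕ, W s m * (x n m * x l m) := tsum_congr expand
    _ = ∑' n : ℕ, ∑' l : ℕ, ∑' m : ℤ, W s m * (x n m * x l m) := swap
    _ ≤ ∑' n : ℕ, ∑' l : ℕ, en s (F n) ^ (1/2:ℝ) * en s (F l) ^ (1/2:ℝ) :=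
        ENNReal.tsum_le_tsum fun n => ENNReal.tsum_le_tsum fun l => inner_le n l
    _ = (∑' n : ℕ, en s (F n) ^ (1/2:ℝ)) ^ 2 := by
        calc ∑' n : ℕ, ∑' l : ℕ, en s (F n) ^ (1/2:ℝ) * en s (F l) ^ (1/2:ℝ)
            = ∑' n : ℕ, en s (F n) ^ (1/2:ℝ) * ∑' l : ℕ, en s (F l) ^ (1/2:ℝ) :=
              tsum_congr fun n => ENNReal.tsum_mul_left
          _ = (∑' n : ℕ, en s (F n) ^ (1/2:ℝ)) * ∑' l : ℕ, en s (F l) ^ (1/2:ℝ) :=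
              ENNReal.tsum_mul_right
          _ = _ := (sq _).symm
end FC
namespace FC

open scoped ENNReal NNReal

lemma sq_rpow_half (x : ℝ≥0∞) : (x^2) ^ (1/2:ℝ) = x := by
  rw [← ENNReal.rpow_natCast x 2, ← ENNReal.rpow_mul]
  norm_num

lemma en_lie_le {τ : ℝ} (hτ : 0 ≤ τ) (ξ f : FC) :
    en τ (lie ξ f)
      ≤ 4 * (ENNReal.ofReal (2^τ) * Bc) * (en (τ+2) ξ * en (τ+1) f) := by
  have h1 : en τ (mul ξ (D1 f))
      ≤ (ENNReal.ofReal (2^τ) * Bc) * (en (τ+2) ξ * en (τ+1) f) := by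
    refine (en_mul_le hτ ξ (D1 f)).trans ?_
    calc ENNReal.ofReal (2^τ) * Bc * en (τ+1) ξ * en τ (D1 f)
        ≤ ENNReal.ofReal (2^τ) * Bc * en (τ+2) ξ * en (τ+1) f := by
          gcongr
          · exact en_mono (by linarith) ξ
          · exact en_D1 τ f
      _ = _ := by ring
  have h2 : en τ (mul (D1 ξ) f)
      ≤ (ENNReal.ofReal (2^τ) * Bc) * (en (τ+2) ξ * en (τ+1) f) := by
    refine (en_mul_le hτ (D1 ξ) f).trans ?_
    calc ENNReal.ofReal (2^τ) * Bc * en (τ+1) (D1 ξ) * en τ f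
        ≤ ENNReal.ofReal (2^τ) * Bc * en (τ+2) ξ * en (τ+1) f := by
          gcongr
          · exact (en_D1 (τ+1) ξ).trans (en_mono (by linarith) ξ)
          · exact en_mono (by linarith) f
      _ = _ := by ring
  calc en τ (lie ξ f) ≤ 2 * (en τ (mul ξ (D1 f)) + en τ (mul (D1 ξ) f)) :=
        en_add_le τ _ _
    _ ≤ 2 * ((ENNReal.ofReal (2^τ) * Bc) * (en (τ+2) ξ * en (τ+1) f)
          + (ENNReal.ofReal (2^τ) * Bc) * (en (τ+2) ξ * en (τ+1) f)) := by
        gcongr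
    _ = 4 * (ENNReal.ofReal (2^τ) * Bc) * (en (τ+2) ξ * en (τ+1) f) := by ring

end FC
open scoped ENNReal NNReal

/-- The singular drift of the stochastic CCF model:
`g(θ) = −(𝓗θ) ∂ₓθ + ½ Σ_k 𝓛²_{ξ_k} θ`. -/
def gCCF (ξ : ℕ → FC) (θ : FC) : FC :=
  -(FC.mul (FC.hilbert θ) (FC.D1 θ)) + (1 / 2 : ℝ) • FC.tsumFC fun k => FC.lie2 (ξ k) θ

/-- Let `s > 5/2` and `Σ_k ‖ξ_k‖_{H^σ} < ∞` for all `σ ≥ 0`.  Then there is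
`C > 0` such that for all `θ ∈ H^s(𝕋)`: `‖g(θ)‖_{H^{s-2}} ≤ C (1 + ‖θ‖²_{H^s})` and
`(Σ_k ‖𝓛_{ξ_k} θ‖²_{H^{s-1}})^{1/2} ≤ C ‖θ‖_{H^s}`. -/
theorem statement4 (s : ℝ) (hs : 5 / 2 < s) (ξ : ℕ → FC)
    (hξmem : ∀ σ : ℝ, 0 ≤ σ → ∀ k : ℕ, FC.memHs σ (ξ k))
    (hξreal : ∀ k : ℕ, FC.isReal (ξ k))
    (hξsum : ∀ σ : ℝ, 0 ≤ σ → Summable fun k : ℕ => FC.hsNorm σ (ξ k)) :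
    ∃ C > (0 : ℝ), ∀ θ : FC, FC.memHs s θ → FC.isReal θ →
      (FC.hsNorm (s - 2) (gCCF ξ θ) ≤ C * (1 + FC.hsNorm s θ ^ 2)) ∧
      (Summable (fun k : ℕ => FC.hsNorm (s - 1) (FC.lie (ξ k) θ) ^ 2) ∧
        Real.sqrt (∑' k : ℕ, FC.hsNorm (s - 1) (FC.lie (ξ k) θ) ^ 2)
          ≤ C * FC.hsNorm s θ) := by
  classical
  have hc1 : (ENNReal.ofReal (2^(s-2)) * FC.Bc) ≠ ∞ :=
    ENNReal.mul_ne_top ENNReal.ofReal_ne_top FC.Bc_ne_top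
  have hc2 : (ENNReal.ofReal (2^(s-1)) * FC.Bc) ≠ ∞ :=
    ENNReal.mul_ne_top ENNReal.ofReal_ne_top FC.Bc_ne_top
  have hΞtop : ∀ k : ℕ, FC.en (s+1) (ξ k) ≠ ∞ :=
    fun k => FC.en_ne_top (hξmem (s+1) (by linarith) k)
  have hsum1 : Summable fun k : ℕ => FC.hsNorm (s+1) (ξ k) := hξsum (s+1) (by linarith)
  have hsumsq : Summable fun k : ℕ => FC.hsNorm (s+1) (ξ k) ^ 2 := by
    refine Summable.of_nonneg_of_le (fun k => sq_nonneg _) (fun k => ?_)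
      (hsum1.mul_left (∑' n, FC.hsNorm (s+1) (ξ n)))
    have hle : FC.hsNorm (s+1) (ξ k) ≤ ∑' n, FC.hsNorm (s+1) (ξ n) :=
      Summable.le_tsum hsum1 k fun j _ => FC.hsNorm_nonneg _ _
    calc FC.hsNorm (s+1) (ξ k)^2 = FC.hsNorm (s+1) (ξ k) * FC.hsNorm (s+1) (ξ k) := sq _
      _ ≤ (∑' n, FC.hsNorm (s+1) (ξ n)) * FC.hsNorm (s+1) (ξ k) :=
          mul_le_mul_of_nonneg_right hle (FC.hsNorm_nonneg _ _)
  have hQ : (∑' k : ℕ, FC.en (s+1) (ξ k)) ≠ ∞ := by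
    have hΞ : ∀ k : ℕ, FC.en (s+1) (ξ k)
        = ENNReal.ofReal (FC.hsNorm (s+1) (ξ k) ^ 2) := by
      intro k
      have hm := hξmem (s+1) (by linarith) k
      rw [FC.hsNorm_sq hm, ENNReal.ofReal_toReal (FC.en_ne_top hm)]
    rw [tsum_congr hΞ, ← ENNReal.ofReal_tsum_of_nonneg (fun k => sq_nonneg _) hsumsq]
    exact ENNReal.ofReal_ne_top
  have hQ2 : (∑' k : ℕ, FC.en (s+1) (ξ k))^2 ≠ ∞ := ENNReal.pow_ne_top hQ
  -- global constants
  have hD : (2 * ((ENNReal.ofReal (2^(s-2)) * FC.Bc)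
      + 16 * (ENNReal.ofReal (2^(s-2)) * FC.Bc) * (ENNReal.ofReal (2^(s-1)) * FC.Bc)
        * (∑' k : ℕ, FC.en (s+1) (ξ k))^2)) ≠ ∞ := by
    refine ENNReal.mul_ne_top ENNReal.ofNat_ne_top (ENNReal.add_ne_top.mpr ⟨hc1, ?_⟩)
    exact ENNReal.mul_ne_top (ENNReal.mul_ne_top
      (ENNReal.mul_ne_top ENNReal.ofNat_ne_top hc1) hc2) hQ2
  have hE : (4 * (ENNReal.ofReal (2^(s-1)) * FC.Bc) * (∑' k : ℕ, FC.en (s+1) (ξ k))) ≠ ∞ :=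
    ENNReal.mul_ne_top (ENNReal.mul_ne_top ENNReal.ofNat_ne_top hc2) hQ
  refine ⟨Real.sqrt ((2 * ((ENNReal.ofReal (2^(s-2)) * FC.Bc)
        + 16 * (ENNReal.ofReal (2^(s-2)) * FC.Bc) * (ENNReal.ofReal (2^(s-1)) * FC.Bc)
          * (∑' k : ℕ, FC.en (s+1) (ξ k))^2)).toReal)
      + Real.sqrt ((4 * (ENNReal.ofReal (2^(s-1)) * FC.Bc)
          * (∑' k : ℕ, FC.en (s+1) (ξ k))).toReal) + 1, by positivity, ?_⟩
  intro θ hθ hreal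
  have hT : FC.en s θ ≠ ∞ := FC.en_ne_top hθ
  have hN0 : 0 ≤ FC.hsNorm s θ := FC.hsNorm_nonneg s θ
  have hN2 : FC.hsNorm s θ ^ 2 = (FC.en s θ).toReal := FC.hsNorm_sq hθ
  -- first product bound
  have b1 : FC.en (s-2) (FC.mul (FC.hilbert θ) (FC.D1 θ))
      ≤ (ENNReal.ofReal (2^(s-2)) * FC.Bc) * (FC.en s θ * FC.en s θ) := by
    refine (FC.en_mul_le (by linarith : (0:ℝ) ≤ s-2) (FC.hilbert θ) (FC.D1 θ)).trans ?_
    calc ENNReal.ofReal (2^(s-2)) * FC.Bc * FC.en (s-2+1) (FC.hilbert θ) * FC.en (s-2) (FC.D1 θ)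
        ≤ ENNReal.ofReal (2^(s-2)) * FC.Bc * FC.en s θ * FC.en s θ := by
          gcongr
          · exact (FC.en_mono (by linarith) _).trans (FC.en_hilbert s θ)
          · exact (FC.en_D1 _ θ).trans (FC.en_mono (by linarith) θ)
      _ = _ := by ring
  have b2 : ∀ k : ℕ, FC.en (s-1) (FC.lie (ξ k) θ)
      ≤ 4 * (ENNReal.ofReal (2^(s-1)) * FC.Bc) * (FC.en (s+1) (ξ k) * FC.en s θ) := by
    intro k
    refine (FC.en_lie_le (by linarith : (0:ℝ) ≤ s-1) (ξ k) θ).trans ?_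
    gcongr
    · exact FC.en_mono (by linarith) _
    · exact FC.en_mono (by linarith) θ
  have b3 : ∀ k : ℕ, FC.en (s-2) (FC.lie2 (ξ k) θ)
      ≤ (16 * (ENNReal.ofReal (2^(s-2)) * FC.Bc) * (ENNReal.ofReal (2^(s-1)) * FC.Bc) * FC.en s θ)
          * FC.en (s+1) (ξ k) ^ 2 := by
    intro k
    have hstep : FC.en (s-2) (FC.lie2 (ξ k) θ)
        ≤ 4 * (ENNReal.ofReal (2^(s-2)) * FC.Bc)
            * (FC.en (s+1) (ξ k) * FC.en (s-1) (FC.lie (ξ k) θ)) := by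
      refine (FC.en_lie_le (by linarith : (0:ℝ) ≤ s-2) (ξ k) (FC.lie (ξ k) θ)).trans ?_
      gcongr
      · exact FC.en_mono (by linarith) _
      · exact FC.en_mono (by linarith) _
    refine hstep.trans ?_
    calc 4 * (ENNReal.ofReal (2^(s-2)) * FC.Bc)
            * (FC.en (s+1) (ξ k) * FC.en (s-1) (FC.lie (ξ k) θ))
        ≤ 4 * (ENNReal.ofReal (2^(s-2)) * FC.Bc)
            * (FC.en (s+1) (ξ k)
              * (4 * (ENNReal.ofReal (2^(s-1)) * FC.Bc) * (FC.en (s+1) (ξ k) * FC.en s θ))) := by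
          gcongr
          exact b2 k
      _ = _ := by ring
  have b4 : FC.en (s-2) (FC.tsumFC fun k => FC.lie2 (ξ k) θ)
      ≤ (16 * (ENNReal.ofReal (2^(s-2)) * FC.Bc) * (ENNReal.ofReal (2^(s-1)) * FC.Bc) * FC.en s θ)
          * (∑' k : ℕ, FC.en (s+1) (ξ k))^2 := by
    refine (FC.en_tsumFC_le (s-2) _).trans ?_
    have h5 : ∀ k : ℕ, FC.en (s-2) (FC.lie2 (ξ k) θ) ^ (1/2:ℝ)
        ≤ (16 * (ENNReal.ofReal (2^(s-2)) * FC.Bc) * (ENNReal.ofReal (2^(s-1)) * FC.Bc)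
            * FC.en s θ) ^ (1/2:ℝ) * FC.en (s+1) (ξ k) := by
      intro k
      refine (ENNReal.rpow_le_rpow (b3 k) (by norm_num)).trans (le_of_eq ?_)
      rw [ENNReal.mul_rpow_of_nonneg _ _ (by norm_num), FC.sq_rpow_half]
    calc (∑' k : ℕ, FC.en (s-2) (FC.lie2 (ξ k) θ) ^ (1/2:ℝ))^2
        ≤ (∑' k : ℕ, (16 * (ENNReal.ofReal (2^(s-2)) * FC.Bc) * (ENNReal.ofReal (2^(s-1)) * FC.Bc)
            * FC.en s θ) ^ (1/2:ℝ) * FC.en (s+1) (ξ k))^2 :=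
          pow_le_pow_left₀ zero_le (ENNReal.tsum_le_tsum h5) 2
      _ = ((16 * (ENNReal.ofReal (2^(s-2)) * FC.Bc) * (ENNReal.ofReal (2^(s-1)) * FC.Bc)
            * FC.en s θ) ^ (1/2:ℝ))^2 * (∑' k : ℕ, FC.en (s+1) (ξ k))^2 := by
          rw [ENNReal.tsum_mul_left, mul_pow]
      _ = _ := by rw [FC.rpow_half_sq]
  have bG : FC.en (s-2) (gCCF ξ θ)
      ≤ 2 * ((ENNReal.ofReal (2^(s-2)) * FC.Bc) * (FC.en s θ * FC.en s θ)
          + (16 * (ENNReal.ofReal (2^(s-2)) * FC.Bc) * (ENNReal.ofReal (2^(s-1)) * FC.Bc)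
              * FC.en s θ) * (∑' k : ℕ, FC.en (s+1) (ξ k))^2) := by
    have hg : gCCF ξ θ
        = (-(FC.mul (FC.hilbert θ) (FC.D1 θ)))
          + ((1/2:ℝ) • FC.tsumFC fun k => FC.lie2 (ξ k) θ) := rfl
    rw [hg]
    refine (FC.en_add_le _ _ _).trans ?_
    gcongr
    · rw [FC.en_neg]; exact b1
    · exact (FC.en_smul_half _ _).trans b4
  have bfinal : FC.en (s-2) (gCCF ξ θ)
      ≤ (2 * ((ENNReal.ofReal (2^(s-2)) * FC.Bc)
          + 16 * (ENNReal.ofReal (2^(s-2)) * FC.Bc) * (ENNReal.ofReal (2^(s-1)) * FC.Bc)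
            * (∑' k : ℕ, FC.en (s+1) (ξ k))^2)) * (1 + FC.en s θ)^2 := by
    refine bG.trans ?_
    have hTT : FC.en s θ * FC.en s θ ≤ (1 + FC.en s θ)^2 := by
      rw [sq]; exact mul_le_mul' le_add_self le_add_self
    have hT1 : FC.en s θ ≤ (1 + FC.en s θ)^2 := by
      calc FC.en s θ ≤ (1 + FC.en s θ) * 1 := by rw [mul_one]; exact le_add_self
        _ ≤ (1 + FC.en s θ) * (1 + FC.en s θ) := by gcongr; exact le_self_add
        _ = (1 + FC.en s θ)^2 := (sq _).symm
    calc 2 * ((ENNReal.ofReal (2^(s-2)) * FC.Bc) * (FC.en s θ * FC.en s θ)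
            + (16 * (ENNReal.ofReal (2^(s-2)) * FC.Bc) * (ENNReal.ofReal (2^(s-1)) * FC.Bc)
                * FC.en s θ) * (∑' k : ℕ, FC.en (s+1) (ξ k))^2)
        = 2 * ((ENNReal.ofReal (2^(s-2)) * FC.Bc) * (FC.en s θ * FC.en s θ))
          + (2 * (16 * (ENNReal.ofReal (2^(s-2)) * FC.Bc) * (ENNReal.ofReal (2^(s-1)) * FC.Bc)
              * (∑' k : ℕ, FC.en (s+1) (ξ k))^2)) * FC.en s θ := by ring
      _ ≤ 2 * ((ENNReal.ofReal (2^(s-2)) * FC.Bc) * (1 + FC.en s θ)^2)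
          + (2 * (16 * (ENNReal.ofReal (2^(s-2)) * FC.Bc) * (ENNReal.ofReal (2^(s-1)) * FC.Bc)
              * (∑' k : ℕ, FC.en (s+1) (ξ k))^2)) * (1 + FC.en s θ)^2 := by
          gcongr
      _ = _ := by ring
  -- part 1 conclusion
  have hG_ne : FC.en (s-2) (gCCF ξ θ) ≠ ∞ := by
    refine ne_top_of_le_ne_top ?_ bfinal
    exact ENNReal.mul_ne_top hD (ENNReal.pow_ne_top (ENNReal.add_ne_top.mpr ⟨ENNReal.one_ne_top, hT⟩))
  have hmemG : FC.memHs (s-2) (gCCF ξ θ) := FC.memHs_of_en_ne_top hG_ne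
  have part1 : FC.hsNorm (s-2) (gCCF ξ θ)
      ≤ (Real.sqrt ((2 * ((ENNReal.ofReal (2^(s-2)) * FC.Bc)
          + 16 * (ENNReal.ofReal (2^(s-2)) * FC.Bc) * (ENNReal.ofReal (2^(s-1)) * FC.Bc)
            * (∑' k : ℕ, FC.en (s+1) (ξ k))^2)).toReal)
        + Real.sqrt ((4 * (ENNReal.ofReal (2^(s-1)) * FC.Bc)
            * (∑' k : ℕ, FC.en (s+1) (ξ k))).toReal) + 1) * (1 + FC.hsNorm s θ ^ 2) := by
    have hsqle : FC.hsNorm (s-2) (gCCF ξ θ) ^ 2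
        ≤ (2 * ((ENNReal.ofReal (2^(s-2)) * FC.Bc)
          + 16 * (ENNReal.ofReal (2^(s-2)) * FC.Bc) * (ENNReal.ofReal (2^(s-1)) * FC.Bc)
            * (∑' k : ℕ, FC.en (s+1) (ξ k))^2)).toReal * (1 + FC.hsNorm s θ ^ 2)^2 := by
      rw [FC.hsNorm_sq hmemG]
      have h9 : ((2 * ((ENNReal.ofReal (2^(s-2)) * FC.Bc)
              + 16 * (ENNReal.ofReal (2^(s-2)) * FC.Bc) * (ENNReal.ofReal (2^(s-1)) * FC.Bc)
                * (∑' k : ℕ, FC.en (s+1) (ξ k))^2)) * (1 + FC.en s θ)^2).toReal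
          = (2 * ((ENNReal.ofReal (2^(s-2)) * FC.Bc)
              + 16 * (ENNReal.ofReal (2^(s-2)) * FC.Bc) * (ENNReal.ofReal (2^(s-1)) * FC.Bc)
                * (∑' k : ℕ, FC.en (s+1) (ξ k))^2)).toReal * (1 + FC.hsNorm s θ ^ 2)^2 := by
        rw [ENNReal.toReal_mul, ENNReal.toReal_pow,
          ENNReal.toReal_add ENNReal.one_ne_top hT, ENNReal.toReal_one, hN2]
      rw [← h9]
      refine ENNReal.toReal_mono ?_ bfinal
      exact ENNReal.mul_ne_top hD (ENNReal.pow_ne_top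
        (ENNReal.add_ne_top.mpr ⟨ENNReal.one_ne_top, hT⟩))
    set a := (2 * ((ENNReal.ofReal (2^(s-2)) * FC.Bc)
          + 16 * (ENNReal.ofReal (2^(s-2)) * FC.Bc) * (ENNReal.ofReal (2^(s-1)) * FC.Bc)
            * (∑' k : ℕ, FC.en (s+1) (ξ k))^2)).toReal with ha
    set b := (4 * (ENNReal.ofReal (2^(s-1)) * FC.Bc)
            * (∑' k : ℕ, FC.en (s+1) (ξ k))).toReal with hb
    have ha0 : 0 ≤ a := ENNReal.toReal_nonneg
    have hb0 : 0 ≤ b := ENNReal.toReal_nonneg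
    have h10 : (0:ℝ) ≤ 1 + FC.hsNorm s θ ^ 2 := by positivity
    have hsq2 : FC.hsNorm (s-2) (gCCF ξ θ) ^ 2
        ≤ ((Real.sqrt a + Real.sqrt b + 1) * (1 + FC.hsNorm s θ ^ 2))^2 := by
      refine hsqle.trans ?_
      rw [mul_pow]
      have : a ≤ (Real.sqrt a + Real.sqrt b + 1)^2 := by
        nlinarith [Real.sq_sqrt ha0, Real.sqrt_nonneg a, Real.sqrt_nonneg b]
      exact mul_le_mul_of_nonneg_right this (by positivity)
    calc FC.hsNorm (s-2) (gCCF ξ θ)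
        = Real.sqrt (FC.hsNorm (s-2) (gCCF ξ θ) ^ 2) :=
          (Real.sqrt_sq (FC.hsNorm_nonneg _ _)).symm
      _ ≤ Real.sqrt (((Real.sqrt a + Real.sqrt b + 1) * (1 + FC.hsNorm s θ ^ 2))^2) :=
          Real.sqrt_le_sqrt hsq2
      _ = (Real.sqrt a + Real.sqrt b + 1) * (1 + FC.hsNorm s θ ^ 2) := by
          rw [Real.sqrt_sq (by positivity)]
  -- part 2
  have hen2top : ∀ k : ℕ, FC.en (s-1) (FC.lie (ξ k) θ) ≠ ∞ := by
    intro k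
    refine ne_top_of_le_ne_top ?_ (b2 k)
    exact ENNReal.mul_ne_top (ENNReal.mul_ne_top ENNReal.ofNat_ne_top hc2)
      (ENNReal.mul_ne_top (hΞtop k) hT)
  have hmem2 : ∀ k : ℕ, FC.memHs (s-1) (FC.lie (ξ k) θ) :=
    fun k => FC.memHs_of_en_ne_top (hen2top k)
  have hsq2' : ∀ k : ℕ, FC.hsNorm (s-1) (FC.lie (ξ k) θ)^2
      = (FC.en (s-1) (FC.lie (ξ k) θ)).toReal := fun k => FC.hsNorm_sq (hmem2 k)
  have htsum_le : ∑' k : ℕ, FC.en (s-1) (FC.lie (ξ k) θ)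
      ≤ (4 * (ENNReal.ofReal (2^(s-1)) * FC.Bc) * (∑' k : ℕ, FC.en (s+1) (ξ k))) * FC.en s θ := by
    calc ∑' k : ℕ, FC.en (s-1) (FC.lie (ξ k) θ)
        ≤ ∑' k : ℕ, 4 * (ENNReal.ofReal (2^(s-1)) * FC.Bc)
            * (FC.en (s+1) (ξ k) * FC.en s θ) := ENNReal.tsum_le_tsum b2
      _ = ∑' k : ℕ, (4 * (ENNReal.ofReal (2^(s-1)) * FC.Bc) * FC.en s θ) * FC.en (s+1) (ξ k) :=
          tsum_congr fun k => by ring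
      _ = (4 * (ENNReal.ofReal (2^(s-1)) * FC.Bc) * FC.en s θ) * ∑' k : ℕ, FC.en (s+1) (ξ k) :=
          ENNReal.tsum_mul_left
      _ = _ := by ring
  have hfin2 : (∑' k : ℕ, FC.en (s-1) (FC.lie (ξ k) θ)) ≠ ∞ :=
    ne_top_of_le_ne_top (ENNReal.mul_ne_top hE hT) htsum_le
  have hsummable : Summable fun k : ℕ => FC.hsNorm (s-1) (FC.lie (ξ k) θ)^2 :=
    (ENNReal.summable_toReal hfin2).congr fun k => (hsq2' k).symm
  have heq : ∑' k : ℕ, FC.hsNorm (s-1) (FC.lie (ξ k) θ)^2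
      = (∑' k : ℕ, FC.en (s-1) (FC.lie (ξ k) θ)).toReal := by
    rw [ENNReal.tsum_toReal_eq hen2top]
    exact tsum_congr hsq2'
  refine ⟨part1, hsummable, ?_⟩
  rw [heq]
  have hle2 : (∑' k : ℕ, FC.en (s-1) (FC.lie (ξ k) θ)).toReal
      ≤ (4 * (ENNReal.ofReal (2^(s-1)) * FC.Bc)
          * (∑' k : ℕ, FC.en (s+1) (ξ k))).toReal * FC.hsNorm s θ ^ 2 := by
    calc (∑' k : ℕ, FC.en (s-1) (FC.lie (ξ k) θ)).toReal
        ≤ ((4 * (ENNReal.ofReal (2^(s-1)) * FC.Bc)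
            * (∑' k : ℕ, FC.en (s+1) (ξ k))) * FC.en s θ).toReal :=
          ENNReal.toReal_mono (ENNReal.mul_ne_top hE hT) htsum_le
      _ = (4 * (ENNReal.ofReal (2^(s-1)) * FC.Bc)
            * (∑' k : ℕ, FC.en (s+1) (ξ k))).toReal * (FC.en s θ).toReal :=
          ENNReal.toReal_mul
      _ = _ := by rw [hN2]
  calc Real.sqrt (∑' k : ℕ, FC.en (s-1) (FC.lie (ξ k) θ)).toReal
      ≤ Real.sqrt ((4 * (ENNReal.ofReal (2^(s-1)) * FC.Bc)
          * (∑' k : ℕ, FC.en (s+1) (ξ k))).toReal * FC.hsNorm s θ ^ 2) :=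
        Real.sqrt_le_sqrt hle2
    _ = Real.sqrt ((4 * (ENNReal.ofReal (2^(s-1)) * FC.Bc)
          * (∑' k : ℕ, FC.en (s+1) (ξ k))).toReal) * FC.hsNorm s θ := by
        rw [Real.sqrt_mul ENNReal.toReal_nonneg, Real.sqrt_sq hN0]
    _ ≤ _ := by
        refine mul_le_mul_of_nonneg_right ?_ hN0
        have h1 := Real.sqrt_nonneg ((2 * ((ENNReal.ofReal (2^(s-2)) * FC.Bc)
          + 16 * (ENNReal.ofReal (2^(s-2)) * FC.Bc) * (ENNReal.ofReal (2^(s-1)) * FC.Bc)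
            * (∑' k : ℕ, FC.en (s+1) (ξ k))^2)).toReal)
        linarith
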